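/- Let G_i = {R_i x + ρ_i : ‖Q_i⁻¹x‖_{p_i} ≤ 1} and G_j = {R_j x + ρ_j : ‖Q_j⁻¹x‖_{p_j} ≤ 1} be two general ellipsoids with p_i, p_j > 1, R_i, R_j ∈ SO(d), Q_i, Q_j invertible, and let q_i, q_j be the conjugate exponents. For n ≠ 0 and γ ∈ ℝ, the hyperplane {y : nᵀy = γ} separates G_i and G_j in the sense that nᵀy_i ≥ γ ≥ nᵀy_j for all y_i ∈ G_i, y_j ∈ G_j, if and only if ‖(R_i Q_i)ᵀ n‖_{q_i} ≤ ρ_iᵀ n − γ and ‖−(R_j Q_j)ᵀ n‖_{q_j} ≤ −ρ_jᵀ n + γ. -/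

import Mathlib

open Matrix BigOperators

/-- The p-norm on `Fin d → ℝ`. -/
noncomputable def pnorm {d : ℕ} (p : ℝ) (z : Fin d → ℝ) : ℝ :=
  (∑ i, |z i| ^ p) ^ (1 / p)

lemma pnorm_nonneg {d : ℕ} (p : ℝ) (z : Fin d → ℝ) : 0 ≤ pnorm p z :=
  Real.rpow_nonneg (Finset.sum_nonneg fun i _ => Real.rpow_nonneg (abs_nonneg _) _) _

lemma pnorm_neg {d : ℕ} (p : ℝ) (z : Fin d → ℝ) : pnorm p (-z) = pnorm p z := by
  simp [pnorm]

lemma pnorm_zero {d : ℕ} {p : ℝ} (hp : p ≠ 0) : pnorm p (0 : Fin d → ℝ) = 0 := by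
  simp only [pnorm, Pi.zero_apply, abs_zero, Real.zero_rpow hp, Finset.sum_const_zero]
  exact Real.zero_rpow (one_div_ne_zero hp)

/-- Key duality lemma: the sup of `c ⬝ᵥ z` over the `p`-ball is the `q`-norm of `c`. -/
lemma key {d : ℕ} (p q : ℝ) (hp : 1 < p) (hpq : 1 / p + 1 / q = 1)
    (c : Fin d → ℝ) (M : ℝ) :
    (∀ z : Fin d → ℝ, pnorm p z ≤ 1 → c ⬝ᵥ z ≤ M) ↔ pnorm q c ≤ M := by
  have hp0 : (0:ℝ) < p := lt_trans one_pos hp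
  have h2 : (0:ℝ) < 1 / p := by positivity
  have h3 : 1 / p < 1 := by rw [div_lt_one hp0]; exact hp
  have hinvq : 0 < 1 / q := by linarith
  have hq0 : (0:ℝ) < q := by
    rcases lt_trichotomy q 0 with h | h | h
    · exfalso; have : 1 / q < 0 := by exact div_neg_of_pos_of_neg one_pos h
      linarith
    · exfalso; rw [h] at hinvq; simp at hinvq
    · exact h
  have hq1 : 1 < q := (div_lt_one hq0).mp (by linarith)
  have hconj : Real.HolderConjugate p q := ⟨by rw [inv_one, ← one_div, ← one_div]; exact hpq, hp0, hq0⟩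
  have hsum_nonneg : (0:ℝ) ≤ ∑ i, |c i| ^ q :=
    Finset.sum_nonneg fun i _ => Real.rpow_nonneg (abs_nonneg _) _
  have hSq : pnorm q c ^ q = ∑ i, |c i| ^ q := by
    rw [pnorm, ← Real.rpow_mul hsum_nonneg, one_div_mul_cancel (ne_of_gt hq0),
      Real.rpow_one]
  have hqp : (q - 1) * p = q := by
    field_simp at hpq; nlinarith
  constructor
  · intro h
    rcases eq_or_lt_of_le (pnorm_nonneg q c) with h0 | hSpos
    · rw [← h0]
      have := h 0 (by rw [pnorm_zero (ne_of_gt hp0)]; norm_num)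
      simpa using this
    · set S := pnorm q c with hS
      set z : Fin d → ℝ := fun i => (if c i < 0 then (-1:ℝ) else 1) * |c i| ^ (q-1) / S ^ (q-1)
        with hz
      have hSm : 0 < S ^ (q-1) := Real.rpow_pos_of_pos hSpos _
      have habsz : ∀ i, |z i| = |c i| ^ (q-1) / S ^ (q-1) := by
        intro i
        rw [hz]
        rw [abs_div, abs_mul]
        rw [abs_of_pos hSm, abs_of_nonneg (Real.rpow_nonneg (abs_nonneg _) _)]
        split <;> simp
      have hzp : ∀ i, |z i| ^ p = |c i| ^ q / S ^ q := by
        intro i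
        rw [habsz, Real.div_rpow (Real.rpow_nonneg (abs_nonneg _) _) (le_of_lt hSm),
          ← Real.rpow_mul (abs_nonneg _), ← Real.rpow_mul (le_of_lt hSpos), hqp]
      have hzn : pnorm p z ≤ 1 := by
        rw [pnorm]
        have : ∑ i, |z i| ^ p = 1 := by
          simp_rw [hzp]
          rw [← Finset.sum_div, ← hSq, div_self (ne_of_gt (Real.rpow_pos_of_pos hSpos _))]
        rw [this, Real.one_rpow]
      have hcz : c ⬝ᵥ z = S := by
        have : ∀ i, c i * z i = |c i| ^ q / S ^ (q-1) := by
          intro i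
          rw [hz]
          have hcc : c i * ((if c i < 0 then (-1:ℝ) else 1) * |c i| ^ (q-1)) = |c i| ^ q := by
            have : c i * (if c i < 0 then (-1:ℝ) else 1) = |c i| := by
              split
              · rw [abs_of_neg (by assumption)]; ring
              · rw [abs_of_nonneg (by linarith [not_lt.mp (by assumption)])]; ring
            rw [show c i * ((if c i < 0 then (-1:ℝ) else 1) * |c i| ^ (q-1))
                = (c i * (if c i < 0 then (-1:ℝ) else 1)) * |c i| ^ (q-1) by ring, this,
              ← Real.rpow_one_add' (abs_nonneg _) (by linarith : 1 + (q-1) ≠ 0)]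
            norm_num
          rw [mul_div_assoc', hcc]
        rw [dotProduct]
        simp_rw [this]
        rw [← Finset.sum_div, ← hSq, ← Real.rpow_sub hSpos]
        norm_num
      have := h z hzn
      rw [hcz] at this
      exact this
  · intro hM z hz
    have hMnn : 0 ≤ pnorm q c := pnorm_nonneg q c
    calc c ⬝ᵥ z = ∑ i, z i * c i := by
          simp [dotProduct, mul_comm]
      _ ≤ pnorm p z * pnorm q c := Real.inner_le_Lp_mul_Lq Finset.univ z c hconj
      _ ≤ 1 * pnorm q c := mul_le_mul_of_nonneg_right hz hMnn
      _ ≤ M := by rw [one_mul]; exact hM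

lemma side {d : ℕ} (p q : ℝ) (hp : 1 < p) (hpq : 1 / p + 1 / q = 1)
    (A B : Matrix (Fin d) (Fin d) ℝ) (hA : IsUnit A.det) (ρ n : Fin d → ℝ) (γ : ℝ) :
    (∀ x : Fin d → ℝ, pnorm p (A⁻¹ *ᵥ x) ≤ 1 → γ ≤ n ⬝ᵥ (B *ᵥ x + ρ)) ↔
      pnorm q ((B * A)ᵀ *ᵥ n) ≤ n ⬝ᵥ ρ - γ := by
  have hAA : ∀ z : Fin d → ℝ, A⁻¹ *ᵥ (A *ᵥ z) = z := by
    intro z; rw [Matrix.mulVec_mulVec, Matrix.nonsing_inv_mul _ hA, Matrix.one_mulVec]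
  have hAA' : ∀ x : Fin d → ℝ, A *ᵥ (A⁻¹ *ᵥ x) = x := by
    intro x; rw [Matrix.mulVec_mulVec, Matrix.mul_nonsing_inv _ hA, Matrix.one_mulVec]
  have hdot : ∀ z : Fin d → ℝ, n ⬝ᵥ (B *ᵥ (A *ᵥ z) + ρ)
      = ((B * A)ᵀ *ᵥ n) ⬝ᵥ z + n ⬝ᵥ ρ := by
    intro z
    rw [dotProduct_add, Matrix.mulVec_mulVec, Matrix.dotProduct_mulVec,
      Matrix.mulVec_transpose]
  have step1 : (∀ x : Fin d → ℝ, pnorm p (A⁻¹ *ᵥ x) ≤ 1 → γ ≤ n ⬝ᵥ (B *ᵥ x + ρ)) ↔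
      (∀ z : Fin d → ℝ, pnorm p z ≤ 1 → γ ≤ ((B * A)ᵀ *ᵥ n) ⬝ᵥ z + n ⬝ᵥ ρ) := by
    constructor
    · intro h z hz
      rw [← hdot]
      exact h (A *ᵥ z) (by rw [hAA]; exact hz)
    · intro h x hx
      have := h (A⁻¹ *ᵥ x) hx
      rw [← hdot, hAA'] at this
      exact this
  rw [step1, ← key p q hp hpq ((B * A)ᵀ *ᵥ n) (n ⬝ᵥ ρ - γ)]
  constructor
  · intro h z hz
    have := h (-z) (by rw [pnorm_neg]; exact hz)
    rw [dotProduct_neg] at this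
    linarith
  · intro h z hz
    have := h (-z) (by rw [pnorm_neg]; exact hz)
    rw [dotProduct_neg] at this
    linarith

/-- Theorem 2: existence conditions of a separating hyperplane for two
general ellipsoids. -/
theorem separating_hyperplane_iff {d : ℕ} (pi pj qi qj : ℝ)
    (hpi : 1 < pi) (hpj : 1 < pj)
    (hqi : 1 / pi + 1 / qi = 1) (hqj : 1 / pj + 1 / qj = 1)
    (Ri Qi Rj Qj : Matrix (Fin d) (Fin d) ℝ)
    (hRi : Riᵀ * Ri = 1 ∧ Ri.det = 1) (hRj : Rjᵀ * Rj = 1 ∧ Rj.det = 1)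
    (hQi : IsUnit Qi.det) (hQj : IsUnit Qj.det)
    (ρi ρj : Fin d → ℝ) (n : Fin d → ℝ) (hn : n ≠ 0) (γ : ℝ)
    (Gi Gj : Set (Fin d → ℝ))
    (hGi : Gi = {y | ∃ x : Fin d → ℝ, pnorm pi (Qi⁻¹ *ᵥ x) ≤ 1 ∧ y = Ri *ᵥ x + ρi})
    (hGj : Gj = {y | ∃ x : Fin d → ℝ, pnorm pj (Qj⁻¹ *ᵥ x) ≤ 1 ∧ y = Rj *ᵥ x + ρj}) :
    (∀ yi ∈ Gi, ∀ yj ∈ Gj, n ⬝ᵥ yi ≥ γ ∧ γ ≥ n ⬝ᵥ yj) ↔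
      (pnorm qi ((Ri * Qi)ᵀ *ᵥ n) ≤ ρi ⬝ᵥ n - γ ∧
        pnorm qj (-((Rj * Qj)ᵀ *ᵥ n)) ≤ -(ρj ⬝ᵥ n) + γ) := by
  have hpi0 : pi ≠ 0 := by positivity
  have hpj0 : pj ≠ 0 := by positivity
  have hmemi : ρi ∈ Gi := by
    rw [hGi]
    exact ⟨0, by rw [Matrix.mulVec_zero, pnorm_zero hpi0]; norm_num,
      by rw [Matrix.mulVec_zero, zero_add]⟩
  have hmemj : ρj ∈ Gj := by
    rw [hGj]
    exact ⟨0, by rw [Matrix.mulVec_zero, pnorm_zero hpj0]; norm_num,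
      by rw [Matrix.mulVec_zero, zero_add]⟩
  have hi := side pi qi hpi hqi Qi Ri hQi ρi n γ
  have hj := side pj qj hpj hqj Qj Rj hQj ρj (-n) (-γ)
  simp only [Matrix.mulVec_neg, neg_dotProduct] at hj
  constructor
  · intro h
    constructor
    · rw [show ρi ⬝ᵥ n - γ = n ⬝ᵥ ρi - γ by rw [dotProduct_comm]]
      rw [← hi]
      intro x hx
      rw [hGi] at h
      exact (h _ ⟨x, hx, rfl⟩ ρj hmemj).1
    · rw [show -(ρj ⬝ᵥ n) + γ = -(n ⬝ᵥ ρj) - -γ by rw [dotProduct_comm]; ring]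
      rw [← hj]
      intro x hx
      rw [hGj] at h
      have := (h ρi hmemi _ ⟨x, hx, rfl⟩).2
      linarith
  · rintro ⟨h1, h2⟩ yi hyi yj hyj
    rw [show ρi ⬝ᵥ n - γ = n ⬝ᵥ ρi - γ by rw [dotProduct_comm]] at h1
    rw [show -(ρj ⬝ᵥ n) + γ = -(n ⬝ᵥ ρj) - -γ by rw [dotProduct_comm]; ring] at h2
    rw [← hi] at h1
    rw [← hj] at h2
    rw [hGi] at hyi
    rw [hGj] at hyj
    obtain ⟨xi, hxi, rfl⟩ := hyi
    obtain ⟨xj, hxj, rfl⟩ := hyj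
    refine ⟨h1 xi hxi, ?_⟩
    have := h2 xj hxj
    linarith
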